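/- For n = 2, the image of the map (E, F) ↦ (Tr(E · (F^T)^{-1}), Tr(F · (E^T)^{-1})), where E and F range over invertible 2 × 2 complex matrices, is exactly the set {(x, y) ∈ ℂ² : x ≠ 0 and y ≠ 0} ∪ {(0, 0)}. -/

import Mathlib

open Matrix

lemma trace_inv_fin_two (M : Matrix (Fin 2) (Fin 2) ℂ) (h : IsUnit M) :
    (M⁻¹).trace = M.trace / M.det := by
  have hd : M.det ≠ 0 := by
    simpa using (Matrix.isUnit_iff_isUnit_det M).mp h |>.ne_zero
  rw [Matrix.inv_def, Matrix.trace_smul, Ring.inverse_eq_inv']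
  have : (Matrix.adjugate M).trace = M.trace := by
    rw [Matrix.adjugate_fin_two, Matrix.trace_fin_two]
    simp [Matrix.trace_fin_two]
    ring
  rw [this]
  simp [div_eq_inv_mul]

lemma trace_swap (E F : Matrix (Fin 2) (Fin 2) ℂ) (hE : IsUnit E) (hF : IsUnit F) :
    (F * (Eᵀ)⁻¹).trace = ((E * (Fᵀ)⁻¹)⁻¹).trace := by
  have hFt : IsUnit Fᵀ := by
    rw [Matrix.isUnit_iff_isUnit_det, Matrix.det_transpose, ← Matrix.isUnit_iff_isUnit_det]
    exact hF
  have h1 : (E * (Fᵀ)⁻¹)⁻¹ = Fᵀ * E⁻¹ := by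
    rw [Matrix.mul_inv_rev, Matrix.nonsing_inv_nonsing_inv]
    simpa using (Matrix.isUnit_iff_isUnit_det Fᵀ).mp hFt
  rw [h1, Matrix.trace_mul_comm]
  have h2 : Eᵀ⁻¹ * F = (Fᵀ * E⁻¹)ᵀ := by
    simp [Matrix.transpose_mul, Matrix.transpose_nonsing_inv]
  rw [h2, Matrix.trace_transpose]

/-- For `n = 2`, the image of the map
`(E, F) ↦ (Tr (E * (Fᵀ)⁻¹), Tr (F * (Eᵀ)⁻¹))` on pairs of invertible `2 × 2` complex
matrices is exactly `{(x, y) : x ≠ 0 ∧ y ≠ 0} ∪ {(0, 0)}`. -/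
theorem stmt_12 :
    {p : ℂ × ℂ | ∃ E F : Matrix (Fin 2) (Fin 2) ℂ, IsUnit E ∧ IsUnit F ∧
        (E * (Fᵀ)⁻¹).trace = p.1 ∧ (F * (Eᵀ)⁻¹).trace = p.2}
      = {p : ℂ × ℂ | p.1 ≠ 0 ∧ p.2 ≠ 0} ∪ {(0, 0)} := by
  ext ⟨x, y⟩
  simp only [Set.mem_setOf_eq, Set.mem_union, Set.mem_singleton_iff, Prod.mk.injEq]
  constructor
  · rintro ⟨E, F, hE, hF, hx, hy⟩
    set M := E * (Fᵀ)⁻¹ with hM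
    have hMu : IsUnit M := hE.mul ((Matrix.isUnit_nonsing_inv_iff).mpr (by
      rw [Matrix.isUnit_iff_isUnit_det, Matrix.det_transpose, ← Matrix.isUnit_iff_isUnit_det]
      exact hF))
    have hdet : M.det ≠ 0 := by
      simpa using (Matrix.isUnit_iff_isUnit_det M).mp hMu |>.ne_zero
    have hy' : y = x / M.det := by
      rw [← hy, ← hx, trace_swap E F hE hF, trace_inv_fin_two M hMu]
    by_cases hx0 : x = 0
    · right
      exact ⟨hx0, by simp [hy', hx0]⟩
    · left
      exact ⟨hx0, by simp [hy', hx0, hdet, div_eq_zero_iff]⟩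
  · rintro (⟨hx, hy⟩ | ⟨hx, hy⟩)
    · refine ⟨!![x, 1; -x/y, 0], 1, ?_, isUnit_one, ?_, ?_⟩
      · rw [Matrix.isUnit_iff_isUnit_det]
        simp [Matrix.det_fin_two_of, div_eq_zero_iff, hx, hy]
      · simp [Matrix.trace_fin_two_of]
      · have hdet : (!![x, 1; -x/y, 0] : Matrix (Fin 2) (Fin 2) ℂ).det = x / y := by
          simp [Matrix.det_fin_two_of]
          ring
        rw [Matrix.one_mul, ← Matrix.transpose_nonsing_inv, Matrix.trace_transpose,
          trace_inv_fin_two]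
        · rw [hdet, Matrix.trace_fin_two_of]
          field_simp
          ring
        · rw [Matrix.isUnit_iff_isUnit_det, hdet]
          simp [div_eq_zero_iff, hx, hy]
    · refine ⟨!![0, 1; -1, 0], 1, ?_, isUnit_one, ?_, ?_⟩
      · rw [Matrix.isUnit_iff_isUnit_det]
        simp [Matrix.det_fin_two_of]
      · simp [Matrix.trace_fin_two_of, hx]
      · have hu : IsUnit (!![0, 1; -1, 0] : Matrix (Fin 2) (Fin 2) ℂ) := by
          rw [Matrix.isUnit_iff_isUnit_det]; simp [Matrix.det_fin_two_of]
        rw [Matrix.one_mul, ← Matrix.transpose_nonsing_inv, Matrix.trace_transpose,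
          trace_inv_fin_two _ hu]
        simp [Matrix.trace_fin_two_of, hy]
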